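/- arXiv:2306.04258 — 3 statements merged into one kernel-verified Lean document; each statement's English description precedes it below -/
import Mathlib

section
/- Let g > 0 and let b₁ > b₂ > b₃ > 0 be real numbers. Then 2πg ∫₀^∞ ((s+b₁²)(s+b₂²)(s+b₃²))^(−1/2) ds = (4πg/√(b₁²−b₃²))·F( arccos(b₃/b₁) | (b₁²−b₂²)/(b₁²−b₃²) ); here arccos(b₃/b₁) ∈ (0, π/2) and the parameter (b₁²−b₂²)/(b₁²−b₃²) lies in (0,1), so the right-hand side is defined. Equivalently, the self-gravitational potential V = −2πg ∫₀^∞ ((s+b₁²)(s+b₂²)(s+b₃²))^(−1/2) ds of the ellipsoid with semi-axes b₁, b₂, b₃ equals −(4πg/√(b₁²−b₃²))·F( arccos(b₃/b₁) | (b₁²−b₂²)/(b₁²−b₃²) ). -/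
open Real MeasureTheory

private lemma rpow_neg_half_eq {x : ℝ} (hx : 0 ≤ x) : x ^ (-(1:ℝ)/2) = (Real.sqrt x)⁻¹ := by
  rw [show (-(1:ℝ)/2) = -(1/2) by ring, Real.rpow_neg hx, ← Real.sqrt_eq_rpow]

set_option maxHeartbeats 1000000 in
theorem main_integral (b1 b2 b3 : ℝ) (h21 : b2 < b1) (h32 : b3 < b2) (h3 : 0 < b3) :
    ∫ s in Set.Ioi (0:ℝ), ((s + b1 ^ 2) * (s + b2 ^ 2) * (s + b3 ^ 2)) ^ (-(1:ℝ)/2)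
      = 2 / Real.sqrt (b1 ^ 2 - b3 ^ 2) *
        ∫ θ in (0:ℝ)..(Real.arccos (b3 / b1)),
          (1 - (b1 ^ 2 - b2 ^ 2) / (b1 ^ 2 - b3 ^ 2) * Real.sin θ ^ 2) ^ (-(1:ℝ)/2) := by
  have hb2 : 0 < b2 := h3.trans h32
  have hb1 : 0 < b1 := hb2.trans h21
  set A := b1 ^ 2 - b3 ^ 2 with hAdef
  set B := b1 ^ 2 - b2 ^ 2 with hBdef
  have hA : 0 < A := by nlinarith
  have hB : 0 < B := by nlinarith
  have hBA : B < A := by nlinarith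
  set m := B / A with hmdef
  set φ := Real.arccos (b3 / b1) with hφdef
  have hx0 : 0 < b3 / b1 := div_pos h3 hb1
  have hx1 : b3 / b1 < 1 := (div_lt_one hb1).2 (h32.trans h21)
  have hφ0 : 0 < φ := Real.arccos_pos.2 hx1
  have hφπ : φ < π / 2 := Real.arccos_lt_pi_div_two.2 hx0
  have hcosφ : Real.cos φ = b3 / b1 := Real.cos_arccos (by linarith) hx1.le
  have hsinφ_pos : 0 < Real.sin φ := Real.sin_pos_of_pos_of_lt_pi hφ0 (by linarith [Real.pi_pos])
  have hsinφ_sq : Real.sin φ ^ 2 = A / b1 ^ 2 := by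
    have := Real.sin_sq_add_cos_sq φ
    rw [hcosφ] at this
    field_simp at this ⊢
    nlinarith
  -- the substitution
  set f : ℝ → ℝ := fun θ => A / Real.sin θ ^ 2 - b1 ^ 2 with hfdef
  set f' : ℝ → ℝ := fun θ => -(2 * A * Real.cos θ / Real.sin θ ^ 3) with hf'def
  have hmem : ∀ θ ∈ Set.Ioo (0:ℝ) φ, 0 < Real.sin θ ∧ 0 < Real.cos θ := by
    intro θ hθ
    exact ⟨Real.sin_pos_of_pos_of_lt_pi hθ.1 (by linarith [Real.pi_pos, hθ.2]),
      Real.cos_pos_of_mem_Ioo ⟨by linarith [hθ.1, Real.pi_pos], by linarith [hθ.2]⟩⟩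
  have hderiv : ∀ θ ∈ Set.Ioo (0:ℝ) φ, HasDerivWithinAt f (f' θ) (Set.Ioo (0:ℝ) φ) θ := by
    intro θ hθ
    have hu : Real.sin θ ≠ 0 := (hmem θ hθ).1.ne'
    have h1 : HasDerivAt (fun t => Real.sin t ^ 2) (2 * Real.sin θ ^ 1 * Real.cos θ) θ :=
      (Real.hasDerivAt_sin θ).pow 2
    have h2 : HasDerivAt (fun t => A / Real.sin t ^ 2)
        ((0 * Real.sin θ ^ 2 - A * (2 * Real.sin θ ^ 1 * Real.cos θ)) / (Real.sin θ ^ 2) ^ 2) θ :=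
      (hasDerivAt_const θ A).div h1 (pow_ne_zero 2 hu)
    have h3 : HasDerivAt f
        ((0 * Real.sin θ ^ 2 - A * (2 * Real.sin θ ^ 1 * Real.cos θ)) / (Real.sin θ ^ 2) ^ 2) θ :=
      h2.sub_const _
    have : f' θ = (0 * Real.sin θ ^ 2 - A * (2 * Real.sin θ ^ 1 * Real.cos θ))
        / (Real.sin θ ^ 2) ^ 2 := by
      simp only [hf'def]
      field_simp
      ring
    rw [this]
    exact h3.hasDerivWithinAt
  have hanti : StrictAntiOn f (Set.Ioo (0:ℝ) φ) := by
    intro θ1 hθ1 θ2 hθ2 h12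
    have hs1 := (hmem θ1 hθ1).1
    have hs2 := (hmem θ2 hθ2).1
    have hsin : Real.sin θ1 < Real.sin θ2 := by
      apply Real.strictMonoOn_sin ⟨by linarith [hθ1.1, Real.pi_pos], by linarith [hθ1.2]⟩
        ⟨by linarith [hθ2.1, Real.pi_pos], by linarith [hθ2.2]⟩ h12
    have : Real.sin θ1 ^ 2 < Real.sin θ2 ^ 2 := by nlinarith
    have := div_lt_div_of_pos_left hA (by positivity : (0:ℝ) < Real.sin θ1 ^ 2) this
    simp only [hfdef]
    linarith
  have himage : f '' Set.Ioo (0:ℝ) φ = Set.Ioi (0:ℝ) := by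
    apply Set.eq_of_subset_of_subset
    · rintro _ ⟨θ, hθ, rfl⟩
      have hs := (hmem θ hθ).1
      have hsin : Real.sin θ < Real.sin φ := by
        apply Real.strictMonoOn_sin ⟨by linarith [hθ.1, Real.pi_pos], by linarith [hθ.2]⟩
          ⟨by linarith [Real.pi_pos], by linarith⟩ hθ.2
      have hsq : Real.sin θ ^ 2 < A / b1 ^ 2 := by rw [← hsinφ_sq]; nlinarith
      have : b1 ^ 2 < A / Real.sin θ ^ 2 := by
        rw [lt_div_iff₀ (by positivity)]
        calc b1 ^ 2 * Real.sin θ ^ 2 < b1 ^ 2 * (A / b1 ^ 2) := by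
              exact mul_lt_mul_of_pos_left hsq (by positivity)
          _ = A := by field_simp
      simp only [hfdef, Set.mem_Ioi]
      linarith
    · intro y hy
      simp only [Set.mem_Ioi] at hy
      have hyb : (0:ℝ) < y + b1 ^ 2 := by positivity
      set t := Real.sqrt (A / (y + b1 ^ 2)) with htdef
      have ht0 : 0 < t := Real.sqrt_pos.2 (by positivity)
      have htφ : t < Real.sin φ := by
        have h1 : A / (y + b1 ^ 2) < A / b1 ^ 2 := by
          apply div_lt_div_of_pos_left hA (by positivity); linarith
        calc t < Real.sqrt (A / b1 ^ 2) := Real.sqrt_lt_sqrt (by positivity) h1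
          _ = Real.sqrt (Real.sin φ ^ 2) := by rw [hsinφ_sq]
          _ = Real.sin φ := Real.sqrt_sq hsinφ_pos.le
      have ht1 : t ≤ 1 := by
        have := Real.sin_le_one φ; linarith
      refine ⟨Real.arcsin t, ⟨Real.arcsin_pos.2 ht0, ?_⟩, ?_⟩
      · have hsin_arcsin : Real.sin (Real.arcsin t) = t := Real.sin_arcsin (by linarith) ht1
        by_contra h
        push_neg at h
        have : Real.sin φ ≤ Real.sin (Real.arcsin t) := by
          rcases eq_or_lt_of_le h with h' | h'
          · rw [h']
          · exact le_of_lt (Real.strictMonoOn_sin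
              ⟨by linarith [Real.pi_pos], by linarith⟩ (Real.arcsin_mem_Icc t) h')
        rw [hsin_arcsin] at this; linarith
      · have hsin_arcsin : Real.sin (Real.arcsin t) = t := Real.sin_arcsin (by linarith) ht1
        simp only [hfdef, hsin_arcsin]
        rw [htdef]
        rw [Real.sq_sqrt (by positivity)]
        field_simp
        ring
  rw [← himage, integral_image_eq_integral_abs_deriv_smul measurableSet_Ioo hderiv
    (hanti.injOn)]
  have hpt : ∀ θ ∈ Set.Ioo (0:ℝ) φ,
      |f' θ| • ((f θ + b1 ^ 2) * (f θ + b2 ^ 2) * (f θ + b3 ^ 2)) ^ (-(1:ℝ)/2)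
        = 2 / Real.sqrt A * (1 - m * Real.sin θ ^ 2) ^ (-(1:ℝ)/2) := by
    intro θ hθ
    obtain ⟨hu, hc⟩ := hmem θ hθ
    set u := Real.sin θ
    set c := Real.cos θ
    have hu1 : u < 1 := by
      have : Real.sin θ < Real.sin (π/2) := Real.strictMonoOn_sin
        ⟨by linarith [hθ.1, Real.pi_pos], by linarith [hθ.2]⟩
        ⟨by linarith [Real.pi_pos], le_refl _⟩ (by linarith [hθ.2])
      simpa using this
    have hD : 0 < 1 - m * u ^ 2 := by
      have hm1 : m < 1 := (div_lt_one hA).2 hBA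
      have hm0 : 0 < m := div_pos hB hA
      have hu2 : u ^ 2 < 1 := by nlinarith
      have : m * u ^ 2 < m * 1 := mul_lt_mul_of_pos_left hu2 hm0
      linarith
    set D := 1 - m * u ^ 2 with hDdef
    set K := 2 * A * c / u ^ 3 with hKdef
    have hK : 0 < K := by positivity
    have habs : |f' θ| = K := by
      simp only [hf'def, hKdef]
      rw [abs_neg, abs_of_pos (by positivity)]
    have hcu : c ^ 2 = 1 - u ^ 2 := by
      have := Real.sin_sq_add_cos_sq θ; linarith
    have e1 : f θ + b1 ^ 2 = A / u ^ 2 := by simp [hfdef]; rfl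
    have e2 : f θ + b2 ^ 2 = A * D / u ^ 2 := by
      simp only [hfdef, hDdef, hmdef, hBdef]
      rw [show Real.sin θ = u from rfl]
      field_simp
      ring
    have e3 : f θ + b3 ^ 2 = A * c ^ 2 / u ^ 2 := by
      simp only [hfdef, hcu, hAdef]
      rw [show Real.sin θ = u from rfl]
      field_simp
      ring
    have hprod : (f θ + b1 ^ 2) * (f θ + b2 ^ 2) * (f θ + b3 ^ 2) = K ^ 2 * (A * D / 4) := by
      rw [e1, e2, e3, hKdef]
      field_simp
      ring
    rw [habs, smul_eq_mul, hprod, rpow_neg_half_eq (by positivity),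
      rpow_neg_half_eq hD.le]
    have h4 : Real.sqrt (K ^ 2 * (A * D / 4)) = K * (Real.sqrt A * Real.sqrt D / 2) := by
      have : K ^ 2 * (A * D / 4) = (K * (Real.sqrt A * Real.sqrt D / 2)) ^ 2 := by
        have h1 : Real.sqrt A ^ 2 = A := Real.sq_sqrt hA.le
        have h2 : Real.sqrt D ^ 2 = D := Real.sq_sqrt hD.le
        linear_combination (-(K ^ 2 * Real.sqrt D ^ 2 / 4)) * h1 + (-(K ^ 2 * A / 4)) * h2
      rw [this, Real.sqrt_sq (by positivity)]
    rw [h4]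
    have hsA : 0 < Real.sqrt A := Real.sqrt_pos.2 hA
    have hsD : 0 < Real.sqrt D := Real.sqrt_pos.2 hD
    field_simp
  rw [MeasureTheory.setIntegral_congr_fun measurableSet_Ioo hpt,
    MeasureTheory.integral_const_mul]
  congr 1
  rw [intervalIntegral.integral_of_le hφ0.le, MeasureTheory.integral_Ioc_eq_integral_Ioo]


/-- Incomplete elliptic integral of the first kind, `F(φ|m)` (Mathematica convention). -/
noncomputable def ellF (φ m : ℝ) : ℝ :=
  ∫ θ in (0:ℝ)..φ, (1 - m * Real.sin θ ^ 2) ^ (-(1:ℝ)/2)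

/-- For `g > 0` and `b₁ > b₂ > b₃ > 0`,
`2πg ∫₀^∞ ((s+b₁²)(s+b₂²)(s+b₃²))^(−1/2) ds
  = (4πg/√(b₁²−b₃²))·F(arccos(b₃/b₁) | (b₁²−b₂²)/(b₁²−b₃²))`;
moreover `arccos(b₃/b₁) ∈ (0,π/2)` and the parameter lies in `(0,1)`.  Equivalently, the
self-gravitational potential `V` (the negative of the left-hand side) equals the negative
of the right-hand side. -/
theorem stmt_2 (g b1 b2 b3 : ℝ) (hg : 0 < g) (h21 : b2 < b1) (h32 : b3 < b2) (h3 : 0 < b3) :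
    Real.arccos (b3 / b1) ∈ Set.Ioo 0 (π / 2) ∧
    (b1 ^ 2 - b2 ^ 2) / (b1 ^ 2 - b3 ^ 2) ∈ Set.Ioo (0:ℝ) 1 ∧
    2 * π * g * ∫ s in Set.Ioi (0:ℝ), ((s + b1 ^ 2) * (s + b2 ^ 2) * (s + b3 ^ 2)) ^ (-(1:ℝ)/2)
      = 4 * π * g / Real.sqrt (b1 ^ 2 - b3 ^ 2) *
          ellF (Real.arccos (b3 / b1)) ((b1 ^ 2 - b2 ^ 2) / (b1 ^ 2 - b3 ^ 2)) ∧
    -(2 * π * g * ∫ s in Set.Ioi (0:ℝ),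
        ((s + b1 ^ 2) * (s + b2 ^ 2) * (s + b3 ^ 2)) ^ (-(1:ℝ)/2))
      = -(4 * π * g / Real.sqrt (b1 ^ 2 - b3 ^ 2) *
          ellF (Real.arccos (b3 / b1)) ((b1 ^ 2 - b2 ^ 2) / (b1 ^ 2 - b3 ^ 2))) := by
  have hb2 : 0 < b2 := h3.trans h32
  have hb1 : 0 < b1 := hb2.trans h21
  have hA : 0 < b1 ^ 2 - b3 ^ 2 := by nlinarith
  have hB : 0 < b1 ^ 2 - b2 ^ 2 := by nlinarith
  have hBA : b1 ^ 2 - b2 ^ 2 < b1 ^ 2 - b3 ^ 2 := by nlinarith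
  have hx0 : 0 < b3 / b1 := div_pos h3 hb1
  have hx1 : b3 / b1 < 1 := (div_lt_one hb1).2 (h32.trans h21)
  have hsA : 0 < Real.sqrt (b1 ^ 2 - b3 ^ 2) := Real.sqrt_pos.2 hA
  have hmain : 2 * π * g * ∫ s in Set.Ioi (0:ℝ),
      ((s + b1 ^ 2) * (s + b2 ^ 2) * (s + b3 ^ 2)) ^ (-(1:ℝ)/2)
      = 4 * π * g / Real.sqrt (b1 ^ 2 - b3 ^ 2) *
          ellF (Real.arccos (b3 / b1)) ((b1 ^ 2 - b2 ^ 2) / (b1 ^ 2 - b3 ^ 2)) := by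
    rw [main_integral b1 b2 b3 h21 h32 h3]
    rw [ellF]
    field_simp
    ring
  exact ⟨⟨Real.arccos_pos.2 hx1, Real.arccos_lt_pi_div_two.2 hx0⟩,
    ⟨div_pos hB hA, (div_lt_one hA).2 hBA⟩, hmain, by rw [hmain]⟩
end

section
/- With L the 8×8 real matrix described in the context, the characteristic polynomial of L satisfies det(λ·I₈ − L) = (λ⁴ − S₁λ² + (S₁² − P₁)/4)·(λ⁴ − S₂λ² + (S₂² − P₂)/4) for every λ ∈ ℂ, where S₁ = ℓ₁₅ℓ₅₁ + 2ℓ₁₆ℓ₅₂ + ℓ₂₆ℓ₆₂ and S₂ = ℓ₃₇ℓ₇₃ + 2ℓ₃₈ℓ₇₄ + ℓ₄₈ℓ₈₄. In particular, the eigenvalues of L are ±iω₁, ±iω₂, ±iω₃, ±iω₄ with ω₁ = (−i/√2)·√(S₁ − √P₁), ω₂ = (−i/√2)·√(S₁ + √P₁), ω₃ = (−i/√2)·√(S₂ − √P₂), ω₄ = (−i/√2)·√(S₂ + √P₂). -/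
open Matrix Complex

lemma cpow_half_sq (z : ℂ) : (z ^ ((1:ℂ)/2)) ^ 2 = z := by
  rcases eq_or_ne z 0 with h | h
  · subst h
    rw [Complex.zero_cpow (by norm_num)]
    norm_num
  · rw [sq, ← Complex.cpow_add _ _ h]
    norm_num

lemma isq_aux (z : ℂ) :
    (Complex.I * ((-Complex.I / ((Real.sqrt 2 : ℝ) : ℂ)) * z ^ ((1:ℂ)/2))) ^ 2 = z / 2 := by
  have hc : ((Real.sqrt 2 : ℝ) : ℂ) ^ 2 = 2 := by
    rw [← Complex.ofReal_pow, Real.sq_sqrt (by norm_num : (0:ℝ) ≤ 2)]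
    norm_num
  have hz := cpow_half_sq z
  rw [mul_pow, mul_pow, div_pow, hz, hc, neg_pow, Complex.I_sq]
  ring

lemma gen {m n : Type} [DecidableEq m] [DecidableEq n] [Fintype m] [Fintype n]
    (A : Matrix m m ℂ) (B : Matrix n n ℂ) :
    (Matrix.fromBlocks A 0 0 B).det = A.det * B.det :=
  Matrix.det_fromBlocks_zero₁₂ A 0 B

def perm8 : Fin 4 ⊕ Fin 4 ≃ Fin 8 where
  toFun := Sum.elim ![0,1,4,5] ![2,3,6,7]
  invFun := ![Sum.inl 0, Sum.inl 1, Sum.inr 0, Sum.inr 1, Sum.inl 2, Sum.inl 3, Sum.inr 2, Sum.inr 3]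
  left_inv := by decide
  right_inv := by decide

set_option maxHeartbeats 800000 in
lemma det4 (p q s t u v lam : ℂ) :
    (!![lam,0,-p,-q; 0,lam,-q,-s; -t,-u,lam,0; -u,-v,0,lam]).det
    = lam ^ 4 - (p * t + 2 * q * u + s * v) * lam ^ 2 +
      ((p * t + 2 * q * u + s * v) ^ 2 -
        (p ^ 2 * t ^ 2 + 4 * p * u * (q * t + s * u)
          - 2 * p * s * t * v
          + v * (4 * q * (q * t + s * u) + s ^ 2 * v))) / 4 := by
  rw [Matrix.det_succ_row_zero]
  simp [Fin.sum_univ_succ, Matrix.det_fin_three,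
    show (2:Fin 4).succAbove 2 = 3 from rfl,
    show (3:Fin 4).succAbove 2 = 2 from rfl,
    show Fin.castSucc (2:Fin 3) = (2:Fin 4) from rfl]
  ring

set_option maxHeartbeats 1600000 in
lemma det8 (a15 a16 a26 a37 a38 a48 a51 a52 a62 a73 a74 a84 : ℝ) (lam : ℂ) :
    (lam • (1 : Matrix (Fin 8) (Fin 8) ℂ) -
      Matrix.map !![0,0,0,0,a15,a16,0,0;
                 0,0,0,0,a16,a26,0,0;
                 0,0,0,0,0,0,a37,a38;
                 0,0,0,0,0,0,a38,a48;
                 a51,a52,0,0,0,0,0,0;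
                 a52,a62,0,0,0,0,0,0;
                 0,0,a73,a74,0,0,0,0;
                 0,0,a74,a84,0,0,0,0] ((↑) : ℝ → ℂ)).det
    = (lam ^ 4 - ((a15:ℂ) * a51 + 2 * a16 * a52 + a26 * a62) * lam ^ 2 +
        (((a15:ℂ) * a51 + 2 * a16 * a52 + a26 * a62) ^ 2 -
          ((a15:ℂ) ^ 2 * a51 ^ 2 + 4 * a15 * a52 * (a16 * a51 + a26 * a52)
            - 2 * a15 * a26 * a51 * a62
            + a62 * (4 * a16 * (a16 * a51 + a26 * a52) + a26 ^ 2 * a62))) / 4) *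
      (lam ^ 4 - ((a37:ℂ) * a73 + 2 * a38 * a74 + a48 * a84) * lam ^ 2 +
        (((a37:ℂ) * a73 + 2 * a38 * a74 + a48 * a84) ^ 2 -
          ((a37:ℂ) ^ 2 * a73 ^ 2 + 4 * a37 * a74 * (a38 * a73 + a48 * a74)
            - 2 * a37 * a48 * a73 * a84
            + a84 * (4 * a38 * (a38 * a73 + a48 * a74) + a48 ^ 2 * a84))) / 4) := by
  have hM : lam • (1 : Matrix (Fin 8) (Fin 8) ℂ) -
      Matrix.map !![0,0,0,0,a15,a16,0,0;
                 0,0,0,0,a16,a26,0,0;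
                 0,0,0,0,0,0,a37,a38;
                 0,0,0,0,0,0,a38,a48;
                 a51,a52,0,0,0,0,0,0;
                 a52,a62,0,0,0,0,0,0;
                 0,0,a73,a74,0,0,0,0;
                 0,0,a74,a84,0,0,0,0] ((↑) : ℝ → ℂ)
      = !![lam,0,0,0,-(a15:ℂ),-(a16:ℂ),0,0;
                 0,lam,0,0,-(a16:ℂ),-(a26:ℂ),0,0;
                 0,0,lam,0,0,0,-(a37:ℂ),-(a38:ℂ);
                 0,0,0,lam,0,0,-(a38:ℂ),-(a48:ℂ);
                 -(a51:ℂ),-(a52:ℂ),0,0,lam,0,0,0;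
                 -(a52:ℂ),-(a62:ℂ),0,0,0,lam,0,0;
                 0,0,-(a73:ℂ),-(a74:ℂ),0,0,lam,0;
                 0,0,-(a74:ℂ),-(a84:ℂ),0,0,0,lam] := by
    ext i j
    fin_cases i <;> fin_cases j
    all_goals first
      | rfl
      | norm_num [Matrix.one_apply]
      | simp [Matrix.one_apply]
    all_goals (intro h; exact absurd h (by decide))
  rw [hM, ← Matrix.det_submatrix_equiv_self perm8]
  have h1 : Matrix.submatrix !![lam,0,0,0,-(a15:ℂ),-(a16:ℂ),0,0;
                 0,lam,0,0,-(a16:ℂ),-(a26:ℂ),0,0;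
                 0,0,lam,0,0,0,-(a37:ℂ),-(a38:ℂ);
                 0,0,0,lam,0,0,-(a38:ℂ),-(a48:ℂ);
                 -(a51:ℂ),-(a52:ℂ),0,0,lam,0,0,0;
                 -(a52:ℂ),-(a62:ℂ),0,0,0,lam,0,0;
                 0,0,-(a73:ℂ),-(a74:ℂ),0,0,lam,0;
                 0,0,-(a74:ℂ),-(a84:ℂ),0,0,0,lam] perm8 perm8 =
      Matrix.fromBlocks
        !![lam,0,-(a15:ℂ),-(a16:ℂ); 0,lam,-(a16:ℂ),-(a26:ℂ);
           -(a51:ℂ),-(a52:ℂ),lam,0; -(a52:ℂ),-(a62:ℂ),0,lam]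
        0 0
        !![lam,0,-(a37:ℂ),-(a38:ℂ); 0,lam,-(a38:ℂ),-(a48:ℂ);
           -(a73:ℂ),-(a74:ℂ),lam,0; -(a74:ℂ),-(a84:ℂ),0,lam] := by
    ext i j
    cases i <;> cases j <;> rename_i i j <;> fin_cases i <;> fin_cases j <;> rfl
  rw [h1]
  rw [gen, det4, det4]

/-- The characteristic polynomial of the `8×8` linearisation matrix `L`
of the `S`-type Riemann ellipsoids factors as the product of two even quartics, and its
eigenvalues are `±iω₁, ±iω₂, ±iω₃, ±iω₄` with `ωⱼ = (−i/√2)·√(Sₖ ∓ √Pₖ)`. -/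
theorem stmt_16 (l15 l16 l26 l37 l38 l48 l51 l52 l62 l73 l74 l84 : ℝ)
    (L : Matrix (Fin 8) (Fin 8) ℝ)
    (hL : L = !![0,0,0,0,l15,l16,0,0;
                 0,0,0,0,l16,l26,0,0;
                 0,0,0,0,0,0,l37,l38;
                 0,0,0,0,0,0,l38,l48;
                 l51,l52,0,0,0,0,0,0;
                 l52,l62,0,0,0,0,0,0;
                 0,0,l73,l74,0,0,0,0;
                 0,0,l74,l84,0,0,0,0])
    (S1 S2 P1 P2 : ℝ)
    (hS1 : S1 = l15 * l51 + 2 * l16 * l52 + l26 * l62)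
    (hS2 : S2 = l37 * l73 + 2 * l38 * l74 + l48 * l84)
    (hP1 : P1 = l15 ^ 2 * l51 ^ 2 + 4 * l15 * l52 * (l16 * l51 + l26 * l52)
        - 2 * l15 * l26 * l51 * l62
        + l62 * (4 * l16 * (l16 * l51 + l26 * l52) + l26 ^ 2 * l62))
    (hP2 : P2 = l37 ^ 2 * l73 ^ 2 + 4 * l37 * l74 * (l38 * l73 + l48 * l74)
        - 2 * l37 * l48 * l73 * l84
        + l84 * (4 * l38 * (l38 * l73 + l48 * l74) + l48 ^ 2 * l84))
    (ω₁ ω₂ ω₃ ω₄ : ℂ)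
    (hω₁ : ω₁ = (-Complex.I / ((Real.sqrt 2 : ℝ) : ℂ)) *
      (((S1 : ℂ) - (P1 : ℂ) ^ ((1:ℂ)/2)) ^ ((1:ℂ)/2)))
    (hω₂ : ω₂ = (-Complex.I / ((Real.sqrt 2 : ℝ) : ℂ)) *
      (((S1 : ℂ) + (P1 : ℂ) ^ ((1:ℂ)/2)) ^ ((1:ℂ)/2)))
    (hω₃ : ω₃ = (-Complex.I / ((Real.sqrt 2 : ℝ) : ℂ)) *
      (((S2 : ℂ) - (P2 : ℂ) ^ ((1:ℂ)/2)) ^ ((1:ℂ)/2)))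
    (hω₄ : ω₄ = (-Complex.I / ((Real.sqrt 2 : ℝ) : ℂ)) *
      (((S2 : ℂ) + (P2 : ℂ) ^ ((1:ℂ)/2)) ^ ((1:ℂ)/2))) :
    (∀ lam : ℂ,
      (lam • (1 : Matrix (Fin 8) (Fin 8) ℂ) - L.map ((↑) : ℝ → ℂ)).det
        = (lam ^ 4 - (S1 : ℂ) * lam ^ 2 + ((S1 : ℂ) ^ 2 - (P1 : ℂ)) / 4) *
          (lam ^ 4 - (S2 : ℂ) * lam ^ 2 + ((S2 : ℂ) ^ 2 - (P2 : ℂ)) / 4)) ∧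
    (∀ lam : ℂ,
      (lam • (1 : Matrix (Fin 8) (Fin 8) ℂ) - L.map ((↑) : ℝ → ℂ)).det = 0 ↔
        lam = Complex.I * ω₁ ∨ lam = -(Complex.I * ω₁) ∨
        lam = Complex.I * ω₂ ∨ lam = -(Complex.I * ω₂) ∨
        lam = Complex.I * ω₃ ∨ lam = -(Complex.I * ω₃) ∨
        lam = Complex.I * ω₄ ∨ lam = -(Complex.I * ω₄)) := by
  subst hL
  have hdet : ∀ lam : ℂ,
      (lam • (1 : Matrix (Fin 8) (Fin 8) ℂ) -
        Matrix.map !![0,0,0,0,l15,l16,0,0;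
                 0,0,0,0,l16,l26,0,0;
                 0,0,0,0,0,0,l37,l38;
                 0,0,0,0,0,0,l38,l48;
                 l51,l52,0,0,0,0,0,0;
                 l52,l62,0,0,0,0,0,0;
                 0,0,l73,l74,0,0,0,0;
                 0,0,l74,l84,0,0,0,0] ((↑) : ℝ → ℂ)).det
        = (lam ^ 4 - (S1 : ℂ) * lam ^ 2 + ((S1 : ℂ) ^ 2 - (P1 : ℂ)) / 4) *
          (lam ^ 4 - (S2 : ℂ) * lam ^ 2 + ((S2 : ℂ) ^ 2 - (P2 : ℂ)) / 4) := by
    intro lam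
    rw [det8, hS1, hS2, hP1, hP2]
    push_cast
    ring
  refine ⟨hdet, ?_⟩
  intro lam
  rw [hdet lam]
  have hA : ((P1 : ℂ) ^ ((1:ℂ)/2)) ^ 2 = (P1 : ℂ) := cpow_half_sq _
  have hB : ((P2 : ℂ) ^ ((1:ℂ)/2)) ^ 2 = (P2 : ℂ) := cpow_half_sq _
  have h1 : (Complex.I * ω₁) ^ 2 = ((S1 : ℂ) - (P1 : ℂ) ^ ((1:ℂ)/2)) / 2 := by
    rw [hω₁]; exact isq_aux _
  have h2 : (Complex.I * ω₂) ^ 2 = ((S1 : ℂ) + (P1 : ℂ) ^ ((1:ℂ)/2)) / 2 := by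
    rw [hω₂]; exact isq_aux _
  have h3 : (Complex.I * ω₃) ^ 2 = ((S2 : ℂ) - (P2 : ℂ) ^ ((1:ℂ)/2)) / 2 := by
    rw [hω₃]; exact isq_aux _
  have h4 : (Complex.I * ω₄) ^ 2 = ((S2 : ℂ) + (P2 : ℂ) ^ ((1:ℂ)/2)) / 2 := by
    rw [hω₄]; exact isq_aux _
  have hfac : (lam ^ 4 - (S1 : ℂ) * lam ^ 2 + ((S1 : ℂ) ^ 2 - (P1 : ℂ)) / 4) *
      (lam ^ 4 - (S2 : ℂ) * lam ^ 2 + ((S2 : ℂ) ^ 2 - (P2 : ℂ)) / 4)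
      = ((lam - Complex.I * ω₁) * (lam + Complex.I * ω₁)) *
        ((lam - Complex.I * ω₂) * (lam + Complex.I * ω₂)) *
        (((lam - Complex.I * ω₃) * (lam + Complex.I * ω₃)) *
        ((lam - Complex.I * ω₄) * (lam + Complex.I * ω₄))) := by
    have e1 : (lam - Complex.I * ω₁) * (lam + Complex.I * ω₁)
        = lam ^ 2 - ((S1 : ℂ) - (P1 : ℂ) ^ ((1:ℂ)/2)) / 2 := by rw [← h1]; ring
    have e2 : (lam - Complex.I * ω₂) * (lam + Complex.I * ω₂)
        = lam ^ 2 - ((S1 : ℂ) + (P1 : ℂ) ^ ((1:ℂ)/2)) / 2 := by rw [← h2]; ring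
    have e3 : (lam - Complex.I * ω₃) * (lam + Complex.I * ω₃)
        = lam ^ 2 - ((S2 : ℂ) - (P2 : ℂ) ^ ((1:ℂ)/2)) / 2 := by rw [← h3]; ring
    have e4 : (lam - Complex.I * ω₄) * (lam + Complex.I * ω₄)
        = lam ^ 2 - ((S2 : ℂ) + (P2 : ℂ) ^ ((1:ℂ)/2)) / 2 := by rw [← h4]; ring
    rw [e1, e2, e3, e4]
    nth_rewrite 1 [← hA]
    nth_rewrite 1 [← hB]
    ring
  rw [hfac]
  simp only [mul_eq_zero, sub_eq_zero, add_eq_zero_iff_eq_neg]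
  tauto
end

section
/- With L_I the 6×6 real matrix described in the context, the characteristic polynomial of L_I satisfies det(λ·I₆ − L_I) = (λ² − ℓ₃₆ℓ₆₃)·(λ⁴ − S̄λ² + (S̄² − P̄)/4) for every λ ∈ ℂ, where S̄ = ℓ₁₄ℓ₄₁ + 2ℓ₁₅ℓ₄₂ + ℓ₂₅ℓ₅₂. In particular, the eigenvalues of L_I are ±iω₁, ±iω₂, ±iω₃ with ω₁ = (−i/√2)·√(S̄ − √P̄), ω₂ = (−i/√2)·√(S̄ + √P̄), ω₃ = i·√(ℓ₃₆ℓ₆₃). -/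
open Matrix Complex


@[simp] lemma fin_castSucc_two' {n : ℕ} : Fin.castSucc (2 : Fin (n+3)) = 2 := rfl
@[simp] lemma fin_castSucc_three' {n : ℕ} : Fin.castSucc (3 : Fin (n+4)) = 3 := rfl
@[simp] lemma fin_castSucc_four' {n : ℕ} : Fin.castSucc (4 : Fin (n+5)) = 4 := rfl
@[simp] lemma fin_succ_two' {n : ℕ} : Fin.succ (2 : Fin (n+3)) = 3 := rfl
@[simp] lemma fin_succ_three' {n : ℕ} : Fin.succ (3 : Fin (n+4)) = 4 := rfl
@[simp] lemma fin_succ_four' {n : ℕ} : Fin.succ (4 : Fin (n+5)) = 5 := rfl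
@[simp] lemma cons_val_five' {α : Type*} {m : ℕ} (x : α) (u : Fin (m + 5) → α) :
    Matrix.vecCons x u 5
      = Matrix.vecHead (Matrix.vecTail (Matrix.vecTail (Matrix.vecTail (Matrix.vecTail u)))) :=
  rfl

set_option maxRecDepth 20000 in
set_option maxHeartbeats 1600000 in
lemma det6_aux (a b c d e f g h lam : ℂ) :
    (!![lam,0,0,-a,-b,0;
        0,lam,0,-b,-c,0;
        0,0,lam,0,0,-d;
        -e,-f,0,lam,0,0;
        -f,-g,0,0,lam,0;
        0,0,-h,0,0,lam]).det
      = (lam ^ 2 - d * h) *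
        (lam ^ 4 - (a * e + 2 * b * f + c * g) * lam ^ 2 +
          ((a * e + 2 * b * f + c * g) ^ 2
            - (a ^ 2 * e ^ 2 + 4 * a * f * (b * e + c * f) - 2 * a * c * e * g
              + g * (4 * b * (b * e + c * f) + c ^ 2 * g))) / 4) := by
  simp only [Matrix.det_succ_row_zero, Matrix.submatrix_apply,
    Matrix.submatrix_submatrix, Matrix.det_unique, Fin.default_eq_zero, Function.comp_apply,
    Fin.sum_univ_succ, Fin.val_zero, Fin.zero_succAbove, Finset.univ_unique, Fin.val_succ,
    Fin.val_eq_zero, Fin.succ_succAbove_zero, Finset.sum_singleton, Fin.succ_succAbove_succ,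
    Fin.succ_zero_eq_one, Fin.succ_one_eq_two, fin_succ_two', fin_succ_three', fin_succ_four',
    Matrix.cons_val', Matrix.cons_val_zero, Matrix.cons_val_one, Matrix.cons_val_two,
    Matrix.cons_val_three, Matrix.cons_val_four, cons_val_five', Matrix.cons_val_succ,
    Matrix.head_cons, Matrix.head_fin_const, Matrix.empty_val', Matrix.cons_val_fin_one,
    Matrix.vecHead, Matrix.vecTail, Function.comp, Matrix.of_apply,
    pow_zero, pow_add, pow_one, mul_zero, zero_mul, mul_one, one_mul, mul_neg, neg_mul,
    neg_neg, add_zero, zero_add, neg_zero]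
  simp (config := { decide := true }) only [Fin.succAbove, Fin.lt_def, Fin.castSucc_zero, Fin.castSucc_one,
    fin_castSucc_two', fin_castSucc_three', fin_castSucc_four', Fin.succ_zero_eq_one,
    Fin.succ_one_eq_two, fin_succ_two', fin_succ_three', fin_succ_four', Fin.val_zero,
    Fin.val_one, show ((2:Fin 4):ℕ) = 2 from rfl, show ((2:Fin 5):ℕ) = 2 from rfl,
    show ((2:Fin 6):ℕ) = 2 from rfl, show ((3:Fin 5):ℕ) = 3 from rfl,
    show ((3:Fin 6):ℕ) = 3 from rfl, show ((1:Fin 4):ℕ) = 1 from rfl,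
    show ((1:Fin 5):ℕ) = 1 from rfl]
  norm_num [Matrix.cons_val_zero, Matrix.cons_val_one, Matrix.cons_val_two,
    Matrix.cons_val_three, Matrix.cons_val_four, cons_val_five',
    Matrix.head_cons, Matrix.vecHead, Matrix.vecTail, Function.comp]
  ring


/-- The characteristic polynomial of the `6×6` linearisation matrix
`L_I` of the irrotational ellipsoids factors as `(λ² − ℓ₃₆ℓ₆₃)(λ⁴ − S̄λ² + (S̄² − P̄)/4)`,
and its eigenvalues are `±iω₁, ±iω₂, ±iω₃`. -/
theorem stmt_17 (l14 l15 l25 l36 l41 l42 l52 l63 : ℝ)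
    (LI : Matrix (Fin 6) (Fin 6) ℝ)
    (hLI : LI = !![0,0,0,l14,l15,0;
                   0,0,0,l15,l25,0;
                   0,0,0,0,0,l36;
                   l41,l42,0,0,0,0;
                   l42,l52,0,0,0,0;
                   0,0,l63,0,0,0])
    (Sb Pb : ℝ)
    (hSb : Sb = l14 * l41 + 2 * l15 * l42 + l25 * l52)
    (hPb : Pb = l14 ^ 2 * l41 ^ 2 + 4 * l14 * l42 * (l15 * l41 + l25 * l42)
        - 2 * l14 * l25 * l41 * l52
        + l52 * (4 * l15 * (l15 * l41 + l25 * l42) + l25 ^ 2 * l52))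
    (ω₁ ω₂ ω₃ : ℂ)
    (hω₁ : ω₁ = (-Complex.I / ((Real.sqrt 2 : ℝ) : ℂ)) *
      (((Sb : ℂ) - (Pb : ℂ) ^ ((1:ℂ)/2)) ^ ((1:ℂ)/2)))
    (hω₂ : ω₂ = (-Complex.I / ((Real.sqrt 2 : ℝ) : ℂ)) *
      (((Sb : ℂ) + (Pb : ℂ) ^ ((1:ℂ)/2)) ^ ((1:ℂ)/2)))
    (hω₃ : ω₃ = Complex.I * (((l36 * l63 : ℝ) : ℂ) ^ ((1:ℂ)/2))) :
    (∀ lam : ℂ,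
      (lam • (1 : Matrix (Fin 6) (Fin 6) ℂ) - LI.map ((↑) : ℝ → ℂ)).det
        = (lam ^ 2 - ((l36 * l63 : ℝ) : ℂ)) *
          (lam ^ 4 - (Sb : ℂ) * lam ^ 2 + ((Sb : ℂ) ^ 2 - (Pb : ℂ)) / 4)) ∧
    (∀ lam : ℂ,
      (lam • (1 : Matrix (Fin 6) (Fin 6) ℂ) - LI.map ((↑) : ℝ → ℂ)).det = 0 ↔
        lam = Complex.I * ω₁ ∨ lam = -(Complex.I * ω₁) ∨
        lam = Complex.I * ω₂ ∨ lam = -(Complex.I * ω₂) ∨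
        lam = Complex.I * ω₃ ∨ lam = -(Complex.I * ω₃)) := by
  have hsq : ∀ z : ℂ, (z ^ ((1:ℂ)/2)) ^ 2 = z := fun z => by
    rw [show (1:ℂ)/2 = ((2:ℕ):ℂ)⁻¹ by norm_num]
    exact Complex.cpow_nat_inv_pow z two_ne_zero
  have h2 : ((Real.sqrt 2 : ℝ) : ℂ) ^ 2 = 2 := by
    norm_cast
    rw [Real.sq_sqrt]; norm_num
  have h2ne : ((Real.sqrt 2 : ℝ) : ℂ) ≠ 0 := by
    intro h
    rw [h] at h2; norm_num at h2
  have hc1 : (Complex.I * ω₁) ^ 2 = ((Sb : ℂ) - (Pb : ℂ) ^ ((1:ℂ)/2)) / 2 := by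
    rw [hω₁]
    calc (Complex.I * (-Complex.I / ((Real.sqrt 2 : ℝ) : ℂ) *
          (((Sb : ℂ) - (Pb : ℂ) ^ ((1:ℂ)/2)) ^ ((1:ℂ)/2)))) ^ 2
        = (Complex.I * -Complex.I) ^ 2 *
            ((((Sb : ℂ) - (Pb : ℂ) ^ ((1:ℂ)/2)) ^ ((1:ℂ)/2)) ^ 2) /
            (((Real.sqrt 2 : ℝ) : ℂ)) ^ 2 := by ring
      _ = ((Sb : ℂ) - (Pb : ℂ) ^ ((1:ℂ)/2)) / 2 := by
          rw [mul_neg, Complex.I_mul_I, neg_neg, one_pow, one_mul, hsq, h2]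
  have hc2 : (Complex.I * ω₂) ^ 2 = ((Sb : ℂ) + (Pb : ℂ) ^ ((1:ℂ)/2)) / 2 := by
    rw [hω₂]
    calc (Complex.I * (-Complex.I / ((Real.sqrt 2 : ℝ) : ℂ) *
          (((Sb : ℂ) + (Pb : ℂ) ^ ((1:ℂ)/2)) ^ ((1:ℂ)/2)))) ^ 2
        = (Complex.I * -Complex.I) ^ 2 *
            ((((Sb : ℂ) + (Pb : ℂ) ^ ((1:ℂ)/2)) ^ ((1:ℂ)/2)) ^ 2) /
            (((Real.sqrt 2 : ℝ) : ℂ)) ^ 2 := by ring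
      _ = ((Sb : ℂ) + (Pb : ℂ) ^ ((1:ℂ)/2)) / 2 := by
          rw [mul_neg, Complex.I_mul_I, neg_neg, one_pow, one_mul, hsq, h2]
  have hc3 : (Complex.I * ω₃) ^ 2 = ((l36 * l63 : ℝ) : ℂ) := by
    rw [hω₃]
    calc (Complex.I * (Complex.I * (((l36 * l63 : ℝ) : ℂ) ^ ((1:ℂ)/2)))) ^ 2
        = (Complex.I ^ 2) ^ 2 * ((((l36 * l63 : ℝ) : ℂ) ^ ((1:ℂ)/2)) ^ 2) := by ring
      _ = ((l36 * l63 : ℝ) : ℂ) := by rw [Complex.I_sq, hsq]; ring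
  have hdet : ∀ lam : ℂ,
      (lam • (1 : Matrix (Fin 6) (Fin 6) ℂ) - LI.map ((↑) : ℝ → ℂ)).det
        = (lam ^ 2 - ((l36 * l63 : ℝ) : ℂ)) *
          (lam ^ 4 - (Sb : ℂ) * lam ^ 2 + ((Sb : ℂ) ^ 2 - (Pb : ℂ)) / 4) := by
    intro lam
    have hM : lam • (1 : Matrix (Fin 6) (Fin 6) ℂ) - LI.map ((↑) : ℝ → ℂ)
        = !![lam,0,0,-(l14:ℂ),-(l15:ℂ),0;
             0,lam,0,-(l15:ℂ),-(l25:ℂ),0;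
             0,0,lam,0,0,-(l36:ℂ);
             -(l41:ℂ),-(l42:ℂ),0,lam,0,0;
             -(l42:ℂ),-(l52:ℂ),0,0,lam,0;
             0,0,-(l63:ℂ),0,0,lam] := by
      subst hLI
      ext i j
      fin_cases i <;> fin_cases j <;>
        simp [Matrix.one_apply, Matrix.vecHead, Matrix.vecTail, Function.comp]
    rw [hM, det6_aux]
    push_cast [hSb, hPb]
    ring
  refine ⟨hdet, fun lam => ?_⟩
  have key : ∀ z c : ℂ, z ^ 2 - c ^ 2 = 0 ↔ z = c ∨ z = -c := by
    intro z c
    constructor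
    · intro h
      have h' : (z - c) * (z + c) = 0 := by linear_combination h
      rcases mul_eq_zero.1 h' with h'' | h''
      · exact Or.inl (by linear_combination h'')
      · exact Or.inr (by linear_combination h'')
    · rintro (rfl | rfl) <;> ring
  have hfac : (lam ^ 2 - ((l36 * l63 : ℝ) : ℂ)) *
          (lam ^ 4 - (Sb : ℂ) * lam ^ 2 + ((Sb : ℂ) ^ 2 - (Pb : ℂ)) / 4)
      = (lam ^ 2 - (Complex.I * ω₃) ^ 2) *
        ((lam ^ 2 - (Complex.I * ω₁) ^ 2) * (lam ^ 2 - (Complex.I * ω₂) ^ 2)) := by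
    rw [hc1, hc2, hc3]
    linear_combination ((lam ^ 2 - ((l36 * l63 : ℝ) : ℂ)) / 4) * hsq (Pb : ℂ)
  rw [hdet lam, hfac, mul_eq_zero, mul_eq_zero, sub_eq_zero, sub_eq_zero, sub_eq_zero]
  constructor
  · rintro (h | h | h)
    · rcases (key lam (Complex.I * ω₃)).1 (by rw [h]; ring) with h' | h'
      · exact Or.inr (Or.inr (Or.inr (Or.inr (Or.inl h'))))
      · exact Or.inr (Or.inr (Or.inr (Or.inr (Or.inr h'))))
    · rcases (key lam (Complex.I * ω₁)).1 (by rw [h]; ring) with h' | h'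
      · exact Or.inl h'
      · exact Or.inr (Or.inl h')
    · rcases (key lam (Complex.I * ω₂)).1 (by rw [h]; ring) with h' | h'
      · exact Or.inr (Or.inr (Or.inl h'))
      · exact Or.inr (Or.inr (Or.inr (Or.inl h')))
  · rintro (rfl | rfl | rfl | rfl | rfl | rfl)
    · exact Or.inr (Or.inl rfl)
    · exact Or.inr (Or.inl (by ring))
    · exact Or.inr (Or.inr rfl)
    · exact Or.inr (Or.inr (by ring))
    · exact Or.inl rfl
    · exact Or.inl (by ring)
end
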